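/- Let F be a field of characteristic 2 and let γ_k : FΩ_k → FΩ_{k−1} be the one-step boundary map sending each k-subset Y of {1,...,n} to the sum of its (k−1)-subsets. Then the chain complex 0 → FΩ_n → FΩ_{n−1} → ⋯ → FΩ_1 → FΩ_0 → 0 is exact in every degree, i.e., ker γ_k = im γ_{k+1} for all 1 ≤ k ≤ n−1, γ_n is injective, and γ_1 is surjective. -/

import Mathlib

/-- The free `F`-vector space on the `k`-element subsets of `{1,…,n}` (here `k : ℤ`,
so that the space is zero for `k < 0`). -/
def FOmega (F : Type*) [Field F] (n : ℕ) (k : ℤ) : Type _ :=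
  {s : Finset (Fin n) // (s.card : ℤ) = k} →₀ F

noncomputable instance (F : Type*) [Field F] (n : ℕ) (k : ℤ) :
    AddCommGroup (FOmega F n k) := Finsupp.instAddCommGroup

noncomputable instance (F : Type*) [Field F] (n : ℕ) (k : ℤ) :
    Module F (FOmega F n k) := Finsupp.module _ _

/-- The multistep boundary map `FΩ_a → FΩ_b`, sending a subset `Y` of size `a`
to the sum of all its subsets of size `b` (this is `φ_t^a` with `t = a - b`). -/
noncomputable def phi (F : Type*) [Field F] (n : ℕ) (a b : ℤ) :
    FOmega F n a →ₗ[F] FOmega F n b :=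
  Finsupp.lift _ F _ fun Y =>
    ∑ X ∈ (Y.1.powerset.filter fun X => (X.card : ℤ) = b).attach,
      Finsupp.single ⟨X.1, (Finset.mem_filter.mp X.2).2⟩ (1 : F)

section Aux

variable (F : Type*) [Field F] (n : ℕ)

/-- The ambient ungraded space. -/
abbrev Mspace := Finset (Fin n) →₀ F

/-- The ungraded boundary map. -/
noncomputable def bdryM : Mspace F n →ₗ[F] Mspace F n :=
  Finsupp.lift _ F _ fun Y => ∑ x ∈ Y, Finsupp.single (Y.erase x) (1 : F)

/-- The ungraded homotopy. -/
noncomputable def homM (e : Fin n) : Mspace F n →ₗ[F] Mspace F n :=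
  Finsupp.lift _ F _ fun Y =>
    if e ∈ Y then 0 else Finsupp.single (insert e Y) (1 : F)

/-- Inclusion of a graded piece into the ambient space. -/
noncomputable def iota (k : ℤ) : FOmega F n k →ₗ[F] Mspace F n :=
  Finsupp.lmapDomain F F Subtype.val

/-- The graded homotopy. -/
noncomputable def hmap (e : Fin n) (a b : ℤ) : FOmega F n a →ₗ[F] FOmega F n b :=
  Finsupp.lift _ F _ fun Y =>
    if h : ((insert e Y.1).card : ℤ) = b ∧ e ∉ Y.1 then
      Finsupp.single ⟨insert e Y.1, h.1⟩ (1 : F)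
    else 0

lemma iota_injective (k : ℤ) : Function.Injective (iota F n k) :=
  Finsupp.mapDomain_injective Subtype.val_injective

lemma iota_single (k : ℤ) (Y : {s : Finset (Fin n) // (s.card : ℤ) = k}) (c : F) :
    iota F n k (Finsupp.single Y c) = Finsupp.single Y.1 c :=
  Finsupp.mapDomain_single

lemma bdryM_single (Y : Finset (Fin n)) :
    bdryM F n (Finsupp.single Y 1) = ∑ x ∈ Y, Finsupp.single (Y.erase x) (1 : F) := by
  simp [bdryM, Finsupp.lift_apply, Finsupp.sum_single_index]

lemma homM_single (e : Fin n) (Y : Finset (Fin n)) :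
    homM F n e (Finsupp.single Y 1) =
      if e ∈ Y then 0 else Finsupp.single (insert e Y) (1 : F) := by
  simp [homM, Finsupp.lift_apply, Finsupp.sum_single_index]

lemma phi_single (a b : ℤ) (Y : {s : Finset (Fin n) // (s.card : ℤ) = a}) :
    phi F n a b (Finsupp.single Y 1) =
      ∑ X ∈ (Y.1.powerset.filter fun X => (X.card : ℤ) = b).attach,
        Finsupp.single ⟨X.1, (Finset.mem_filter.mp X.2).2⟩ (1 : F) := by
  rw [phi]
  erw [Finsupp.lift_apply]
  rw [Finsupp.sum_single_index, one_smul]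
  exacts [rfl, zero_smul F _]

lemma hmap_single (e : Fin n) (a b : ℤ) (Y : {s : Finset (Fin n) // (s.card : ℤ) = a}) :
    hmap F n e a b (Finsupp.single Y 1) =
      if h : ((insert e Y.1).card : ℤ) = b ∧ e ∉ Y.1 then
        Finsupp.single ⟨insert e Y.1, h.1⟩ (1 : F)
      else 0 := by
  rw [hmap]
  erw [Finsupp.lift_apply]
  rw [Finsupp.sum_single_index, one_smul]
  exacts [rfl, zero_smul F _]

/-- The inclusion intertwines the one-step boundary maps. -/
lemma iota_phi (a b : ℤ) (hb : b = a - 1) :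
    (iota F n b).comp (phi F n a b) = (bdryM F n).comp (iota F n a) := by
  apply Finsupp.lhom_ext'
  intro Y
  apply LinearMap.ext_ring
  change iota F n b (phi F n a b (Finsupp.single Y 1)) = bdryM F n (iota F n a (Finsupp.single Y 1))
  erw [phi_single, iota_single]
  rw [bdryM_single]
  erw [map_sum]
  simp only [iota_single]
  rw [Finset.sum_attach _ (fun X => Finsupp.single X (1 : F))]
  have hcard : (Y.1.card : ℤ) = a := Y.2
  refine (Finset.sum_bij (fun x hx => Y.1.erase x) ?_ ?_ ?_ ?_).symm
  · intro x hx
    rw [Finset.mem_filter, Finset.mem_powerset]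
    refine ⟨Finset.erase_subset _ _, ?_⟩
    rw [Finset.card_erase_of_mem hx]
    have : 1 ≤ Y.1.card := Finset.card_pos.2 ⟨x, hx⟩
    push_cast [this]
    omega
  · intro x hx x' hx' h
    by_contra hne
    have : x ∈ Y.1.erase x' := Finset.mem_erase.2 ⟨hne, hx⟩
    rw [← h] at this
    exact (Finset.notMem_erase x Y.1) this
  · intro X hX
    rw [Finset.mem_filter, Finset.mem_powerset] at hX
    have hsub := hX.1
    have hc : (Y.1 \ X).card = 1 := by
      rw [Finset.card_sdiff_of_subset hsub]
      have h1 : X.card ≤ Y.1.card := Finset.card_le_card hsub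
      omega
    obtain ⟨x, hx⟩ := Finset.card_eq_one.1 hc
    have hxY : x ∈ Y.1 := by
      have : x ∈ Y.1 \ X := hx ▸ Finset.mem_singleton_self x
      exact (Finset.mem_sdiff.1 this).1
    refine ⟨x, hxY, ?_⟩
    show Y.1.erase x = X
    rw [Finset.erase_eq, ← hx, Finset.sdiff_sdiff_self_left]
    exact Finset.inter_eq_right.2 hsub
  · intro x hx
    rfl

/-- The inclusion intertwines the homotopies. -/
lemma iota_hmap (e : Fin n) (a b : ℤ) (hb : b = a + 1) :
    (iota F n b).comp (hmap F n e a b) = (homM F n e).comp (iota F n a) := by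
  apply Finsupp.lhom_ext'
  intro Y
  apply LinearMap.ext_ring
  change iota F n b (hmap F n e a b (Finsupp.single Y 1)) = homM F n e (iota F n a (Finsupp.single Y 1))
  erw [hmap_single, iota_single]
  rw [homM_single]
  by_cases he : e ∈ Y.1
  · rw [dif_neg (by tauto), if_pos he]
    exact map_zero _
  · have hcond : ((insert e Y.1).card : ℤ) = b ∧ e ∉ Y.1 := by
      refine ⟨?_, he⟩
      rw [Finset.card_insert_of_notMem he]
      push_cast
      rw [Y.2, hb]
    rw [dif_pos hcond, if_neg he, iota_single]

variable [CharP F 2]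

lemma single_add_single (X : Finset (Fin n)) :
    Finsupp.single X (1 : F) + Finsupp.single X (1 : F) = 0 := by
  rw [← Finsupp.single_add, CharTwo.add_self_eq_zero, Finsupp.single_zero]

/-- The homotopy identity in the ambient space. -/
lemma homotopyM (e : Fin n) (v : Mspace F n) :
    bdryM F n (homM F n e v) + homM F n e (bdryM F n v) = v := by
  have : (bdryM F n).comp (homM F n e) + (homM F n e).comp (bdryM F n) =
      LinearMap.id := by
    apply Finsupp.lhom_ext'
    intro Y
    apply LinearMap.ext_ring
    simp only [LinearMap.add_apply, LinearMap.comp_apply, Finsupp.lsingle_apply,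
      LinearMap.id_apply]
    rw [homM_single, bdryM_single, map_sum]
    simp only [homM_single]
    by_cases he : e ∈ Y
    · rw [if_pos he, map_zero, zero_add]
      rw [Finset.sum_eq_single_of_mem e he]
      · rw [if_neg (Finset.notMem_erase e Y), Finset.insert_erase he]
      · intro x hx hne
        rw [if_pos (Finset.mem_erase.2 ⟨Ne.symm hne, he⟩)]
    · rw [if_neg he, bdryM_single, Finset.sum_insert he,
        Finset.erase_insert he]
      have hterm : ∀ x ∈ Y, Finsupp.single ((insert e Y).erase x) (1 : F) =
          Finsupp.single (insert e (Y.erase x)) (1 : F) := by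
        intro x hx
        rw [Finset.erase_insert_of_ne (fun h => he (by rw [h]; exact hx))]
      have hterm2 : ∀ x ∈ Y,
          (if e ∈ Y.erase x then 0 else Finsupp.single (insert e (Y.erase x)) (1 : F)) =
          Finsupp.single (insert e (Y.erase x)) (1 : F) := by
        intro x hx
        rw [if_neg (fun h => he (Finset.mem_of_mem_erase h))]
      rw [Finset.sum_congr rfl hterm, Finset.sum_congr rfl hterm2]
      rw [add_assoc, ← Finset.sum_add_distrib]
      rw [Finset.sum_congr rfl (fun x hx => single_add_single F n _),
        Finset.sum_const_zero, add_zero]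
  have := LinearMap.congr_fun this v
  simpa using this

/-- The boundary squares to zero. -/
lemma bdryM_sq (v : Mspace F n) : bdryM F n (bdryM F n v) = 0 := by
  have : (bdryM F n).comp (bdryM F n) = 0 := by
    apply Finsupp.lhom_ext'
    intro Y
    apply LinearMap.ext_ring
    simp only [LinearMap.comp_apply, Finsupp.lsingle_apply, LinearMap.zero_apply]
    rw [bdryM_single, map_sum]
    simp only [bdryM_single]
    rw [Finset.sum_sigma']
    refine Finset.sum_involution (fun p hp => ⟨p.2, p.1⟩) ?_ ?_ ?_ ?_
    · intro p hp
      rw [Finset.erase_right_comm]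
      exact single_add_single F n _
    · intro p hp hne
      simp only [Finset.mem_sigma] at hp
      intro h
      have : p.1 = p.2 := congrArg Sigma.fst h.symm
      exact (Finset.mem_erase.1 hp.2).1 this.symm
    · intro p hp
      simp only [Finset.mem_sigma] at hp ⊢
      have h2 := Finset.mem_erase.1 hp.2
      exact ⟨h2.2, Finset.mem_erase.2 ⟨fun h => h2.1 h.symm, hp.1⟩⟩
    · intro p hp
      rfl
  exact LinearMap.congr_fun this v

-- Graded pieces out of the range `0 ≤ k ≤ n` are trivial.
omit [CharP F 2] in
lemma fomega_eq_zero (k : ℤ) (hk : k < 0 ∨ (n : ℤ) < k) (v : FOmega F n k) : v = 0 := by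
  apply Finsupp.ext
  intro a
  exfalso
  have h1 : (a.1.card : ℤ) = k := a.2
  have h2 : a.1.card ≤ n := by
    simpa using Finset.card_le_univ a.1
  omega

end Aux

/-- over a field of characteristic two, the one-step chain complex
`0 → FΩ_n → FΩ_{n-1} → ⋯ → FΩ_1 → FΩ_0 → 0` with maps `γ_k = φ_1^k` is exact in
every degree: `ker γ_k = im γ_{k+1}` for `1 ≤ k ≤ n-1`, `γ_n` is injective and
`γ_1` is surjective. -/
theorem one_step_complex_exact (F : Type*) [Field F] [CharP F 2] (n : ℕ)
    (hn : 1 ≤ n) :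
    (∀ k : ℕ, 1 ≤ k → k ≤ n - 1 →
      LinearMap.ker (phi F n k ((k : ℤ) - 1)) =
        LinearMap.range (phi F n ((k : ℤ) + 1) k)) ∧
    Function.Injective (phi F n n ((n : ℤ) - 1)) ∧
    Function.Surjective (phi F n 1 0) := by
  set e : Fin n := ⟨0, hn⟩ with he
  -- key fact: if the boundary of x vanishes, then x is a boundary (of hmap x)
  have key : ∀ (k : ℤ) (x : FOmega F n k), phi F n k (k - 1) x = 0 →
      phi F n (k + 1) k (hmap F n e k (k + 1) x) = x := by
    intro k x hx
    apply iota_injective F n k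
    have h1 := LinearMap.congr_fun (iota_phi F n (k + 1) k (by ring)) (hmap F n e k (k + 1) x)
    simp only [LinearMap.comp_apply] at h1
    rw [h1]
    have h2 := LinearMap.congr_fun (iota_hmap F n e k (k + 1) rfl) x
    simp only [LinearMap.comp_apply] at h2
    rw [h2]
    have h3 := LinearMap.congr_fun (iota_phi F n k (k - 1) rfl) x
    simp only [LinearMap.comp_apply] at h3
    have h4 : bdryM F n (iota F n k x) = 0 := by rw [← h3, hx, map_zero]
    have h5 := homotopyM F n e (iota F n k x)
    rw [h4, map_zero, add_zero] at h5
    exact h5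
  refine ⟨?_, ?_, ?_⟩
  · intro k hk1 hk2
    apply le_antisymm
    · intro x hx
      rw [LinearMap.mem_ker] at hx
      exact ⟨hmap F n e k ((k : ℤ) + 1) x, key k x hx⟩
    · rintro _ ⟨y, rfl⟩
      rw [LinearMap.mem_ker]
      apply iota_injective F n ((k : ℤ) - 1)
      have h1 := LinearMap.congr_fun (iota_phi F n k ((k : ℤ) - 1) rfl)
        (phi F n ((k : ℤ) + 1) k y)
      simp only [LinearMap.comp_apply] at h1
      rw [h1]
      have h2 := LinearMap.congr_fun (iota_phi F n ((k : ℤ) + 1) k (by ring)) y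
      simp only [LinearMap.comp_apply] at h2
      rw [h2, bdryM_sq, map_zero]
  · intro x y hxy
    have h0 : phi F n n ((n : ℤ) - 1) (x - y) = 0 := by
      rw [map_sub, hxy, sub_self]
    have hz : hmap F n e n ((n : ℤ) + 1) (x - y) = 0 :=
      fomega_eq_zero F n _ (Or.inr (by omega)) _
    have hk := key n (x - y) h0
    rw [hz, map_zero] at hk
    exact sub_eq_zero.1 hk.symm
  · intro y
    have h0 : phi F n 0 ((0 : ℤ) - 1) y = 0 :=
      fomega_eq_zero F n _ (Or.inl (by norm_num)) _
    have hk := key 0 y h0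
    norm_num at hk
    exact ⟨hmap F n e 0 ((0 : ℤ) + 1) y, hk⟩
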